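/- Let M ∈ C^∞([0,∞), ℝ), let N ≥ 2 be an integer, and define R_N(t,τ) := ∫_0^t τ e^{-τ s} ∂_s^N K_M(t,s) ds for t ≥ 0, τ ≥ 0. Then for every t ≥ 0 and every τ > 0, |R_N(t,τ)| ≤ e^t · { exp[ N (1+t) ( ∑_{j=0}^N max_{0 ≤ s ≤ t} |M^{(j)}(s)| ) ] − 1 }. -/

import Mathlib

open Set MeasureTheory intervalIntegral Filter Topology
open scoped Interval

/-- Convolution on `[0,∞)` (via signed interval integral): `(f*g)(t) = ∫_0^t f(t-s) g(s) ds`. -/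
noncomputable def conv (f g : ℝ → ℝ) : ℝ → ℝ :=
  fun t => ∫ s in (0:ℝ)..t, f (t - s) * g s

/-- `j`-fold convolution power of `M`, with the conventions `M^{*0} = 0` and `M^{*1} = M`. -/
noncomputable def convPow (M : ℝ → ℝ) : ℕ → ℝ → ℝ
  | 0 => fun _ => 0
  | 1 => M
  | (j+2) => conv M (convPow M (j+1))

/-- The norm `‖f‖_{C^k([0,t])} = ∑_{l=0}^k max_{0 ≤ τ ≤ t} |f^{(l)}(τ)|`,
derivatives taken within `[0,∞)`. -/
noncomputable def CkNorm (k : ℕ) (t : ℝ) (f : ℝ → ℝ) : ℝ :=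
  ∑ l ∈ Finset.range (k+1), ⨆ τ : Set.Icc (0:ℝ) t, |iteratedDerivWithin l f (Set.Ici 0) τ|

/-- The flow kernel `K_M(t,s) = ∑_{j≥1} ((-s)^j / j!) M^{*j}(t-s)`. -/
noncomputable def KM (M : ℝ → ℝ) (t s : ℝ) : ℝ :=
  ∑' j : ℕ, ((-s) ^ j / (j.factorial : ℝ)) * convPow M j (t - s)

/-- The remainder kernel `R_N(t,τ) = ∫_0^t τ e^{-τs} ∂_s^N K_M(t,s) ds`,
the `s`-derivative of `K_M(t,·)` being taken within its domain `(-∞, t]`. -/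
noncomputable def RNrem (M : ℝ → ℝ) (N : ℕ) (t τ : ℝ) : ℝ :=
  ∫ s in (0:ℝ)..t,
    τ * Real.exp (-τ * s) * iteratedDerivWithin N (fun s' => KM M t s') (Set.Iic t) s

set_option linter.unusedSectionVars false
set_option linter.unreachableTactic false
set_option linter.unusedTactic false
set_option linter.unusedVariables false

lemma conv_eq_scaled {f g : ℝ → ℝ} {u : ℝ} (hu : 0 < u) :
    conv f g u = ∫ σ in (0:ℝ)..1, u * (f (u - u*σ) * g (u*σ)) := by
  have h := intervalIntegral.integral_comp_mul_left (a := (0:ℝ)) (b := 1)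
    (fun s => f (u - s) * g s) (c := u) hu.ne'
  simp only [mul_zero, mul_one] at h
  rw [intervalIntegral.integral_const_mul]
  rw [show (fun σ : ℝ => f (u - u*σ) * g (u*σ)) = fun σ : ℝ => (fun s => f (u - s) * g s) (u*σ)
    from rfl] at *
  rw [h, smul_eq_mul, ← mul_assoc, mul_inv_cancel₀ hu.ne', one_mul]
  rfl

section scaled

variable {f g : ℝ → ℝ}

lemma scaled_integrand_contOn (hf : ContinuousOn f (Ici 0)) (hg : ContinuousOn g (Ici 0))
    {u : ℝ} (hu : 0 ≤ u) :
    ContinuousOn (fun σ : ℝ => u * (f (u - u*σ) * g (u*σ))) (Icc 0 1) := by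
  apply continuousOn_const.mul
  apply ContinuousOn.mul
  · apply hf.comp (by fun_prop)
    intro σ hσ
    simp only [mem_Ici, sub_nonneg]
    nlinarith [hσ.1, hσ.2]
  · apply hg.comp (by fun_prop)
    intro σ hσ
    exact mul_nonneg hu hσ.1

lemma conv_continuousOn (hf : ContinuousOn f (Ici 0)) (hg : ContinuousOn g (Ici 0)) :
    ContinuousOn (conv f g) (Ici 0) := by
  intro u₀ hu₀
  have h0 : (0:ℝ) ≤ u₀ := hu₀
  have key : ContinuousWithinAt (fun u => ∫ σ in (0:ℝ)..1, u * (f (u - u*σ) * g (u*σ)))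
      (Ici 0) u₀ := by
    obtain ⟨Cf, hCf⟩ := (isCompact_Icc (a := (0:ℝ)) (b := u₀ + 1)).exists_bound_of_continuousOn
      (hf.mono (Icc_subset_Ici_self))
    obtain ⟨Cg, hCg⟩ := (isCompact_Icc (a := (0:ℝ)) (b := u₀ + 1)).exists_bound_of_continuousOn
      (hg.mono (Icc_subset_Ici_self))
    have hCf0 : 0 ≤ Cf := le_trans (norm_nonneg _) (hCf 0 ⟨le_refl _, by linarith⟩)
    have hCg0 : 0 ≤ Cg := le_trans (norm_nonneg _) (hCg 0 ⟨le_refl _, by linarith⟩)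
    apply intervalIntegral.continuousWithinAt_of_dominated_interval
      (bound := fun _ => (u₀+1) * (Cf * Cg))
    · filter_upwards [self_mem_nhdsWithin] with u (hu : u ∈ Ici 0)
      exact ((scaled_integrand_contOn hf hg hu).mono
        (by rw [uIoc_of_le (zero_le_one)]; exact Ioc_subset_Icc_self)).aestronglyMeasurable
        measurableSet_uIoc
    · have hmem : (Ici 0 ∩ Iio (u₀+1)) ∈ 𝓝[Ici 0] u₀ :=
        inter_mem_nhdsWithin _ (Iio_mem_nhds (by linarith))
      filter_upwards [hmem] with u hu
      apply ae_of_all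
      intro σ hσ
      rw [uIoc_of_le (zero_le_one)] at hσ
      have hu0 : 0 ≤ u := hu.1
      have hu1 : u ≤ u₀ + 1 := le_of_lt hu.2
      have hσ0 : 0 ≤ σ := hσ.1.le
      have hσ1 : σ ≤ 1 := hσ.2
      have huσ : u*σ ≤ u := by nlinarith
      have h1 : u - u*σ ∈ Icc 0 (u₀+1) := ⟨by nlinarith, by nlinarith⟩
      have h2 : u*σ ∈ Icc 0 (u₀+1) := ⟨by positivity, by nlinarith⟩
      have : ‖u * (f (u - u*σ) * g (u*σ))‖ = u * (‖f (u - u*σ)‖ * ‖g (u*σ)‖) := by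
        rw [norm_mul, norm_mul, Real.norm_eq_abs u, abs_of_nonneg hu0]
      rw [this]
      apply mul_le_mul hu1 (mul_le_mul (hCf _ h1) (hCg _ h2) (norm_nonneg _) hCf0)
        (by positivity) (by positivity)
    · exact intervalIntegrable_const
    · apply ae_of_all
      intro σ hσ
      rw [uIoc_of_le (zero_le_one)] at hσ
      have hσ0 : 0 ≤ σ := hσ.1.le
      have hσ1 : σ ≤ 1 := hσ.2
      have m1 : MapsTo (fun x : ℝ => x - x*σ) (Ici 0) (Ici 0) := by
        intro x hx
        have : 0 ≤ x := hx
        simp only [mem_Ici, sub_nonneg]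
        nlinarith
      have m2 : MapsTo (fun x : ℝ => x*σ) (Ici 0) (Ici 0) := by
        intro x hx
        exact mul_nonneg hx hσ0
      have c1 : ContinuousWithinAt (fun x : ℝ => x - x*σ) (Ici 0) u₀ :=
        (continuousWithinAt_id.sub (continuousWithinAt_id.mul continuousWithinAt_const))
      have c2 : ContinuousWithinAt (fun x : ℝ => x*σ) (Ici 0) u₀ :=
        continuousWithinAt_id.mul continuousWithinAt_const
      have cf : ContinuousWithinAt (fun x : ℝ => f (x - x*σ)) (Ici 0) u₀ :=
        ContinuousWithinAt.comp (g := f) (f := fun x : ℝ => x - x*σ) (hf _ (m1 hu₀)) c1 m1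
      have cg : ContinuousWithinAt (fun x : ℝ => g (x*σ)) (Ici 0) u₀ :=
        ContinuousWithinAt.comp (g := g) (f := fun x : ℝ => x*σ) (hg _ (m2 hu₀)) c2 m2
      exact continuousWithinAt_id.mul (cf.mul cg)
  apply key.congr
  · intro u hu
    rcases eq_or_lt_of_le (mem_Ici.1 hu) with h | h
    · simp [conv, ← h]
    · exact conv_eq_scaled h
  · rcases eq_or_lt_of_le h0 with h | h
    · simp [conv, ← h]
    · exact conv_eq_scaled h

end scaled

section core

variable {f f' g g' : ℝ → ℝ}

/-- continuity on `Icc 0 1` of `σ ↦ h (u - u σ)` and `σ ↦ h (u σ)` -/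
lemma comp_contOn1 {h : ℝ → ℝ} (hh : ContinuousOn h (Ici 0)) {u : ℝ} (hu : 0 ≤ u) :
    ContinuousOn (fun σ : ℝ => h (u - u*σ)) (Icc 0 1) := by
  apply hh.comp (by fun_prop)
  intro σ hσ
  simp only [mem_Ici, sub_nonneg]
  nlinarith [hσ.1, hσ.2]

lemma comp_contOn2 {h : ℝ → ℝ} (hh : ContinuousOn h (Ici 0)) {u : ℝ} (hu : 0 ≤ u) :
    ContinuousOn (fun σ : ℝ => h (u*σ)) (Icc 0 1) := by
  apply hh.comp (by fun_prop)
  intro σ hσ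
  exact mul_nonneg hu hσ.1

lemma ae_ne_one : ∀ᵐ σ : ℝ, σ ≠ (1:ℝ) := by
  have : (volume : Measure ℝ) {(1:ℝ)} = 0 := measure_singleton 1
  rw [ae_iff]
  convert this using 2
  ext σ
  simp

lemma contOn01_ii {h : ℝ → ℝ} (hh : ContinuousOn h (Icc 0 1)) :
    IntervalIntegrable h volume 0 1 :=
  ContinuousOn.intervalIntegrable (by rw [uIcc_of_le (zero_le_one : (0:ℝ) ≤ 1)]; exact hh)

lemma contOn01_aesm {h : ℝ → ℝ} (hh : ContinuousOn h (Icc 0 1)) :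
    AEStronglyMeasurable h (volume.restrict (Ι (0:ℝ) 1)) :=
  (hh.mono (by rw [uIoc_of_le (zero_le_one : (0:ℝ) ≤ 1)]; exact Ioc_subset_Icc_self)).aestronglyMeasurable
    measurableSet_uIoc

lemma conv_hasDerivAt
    (hf : ContinuousOn f (Ici 0)) (hf' : ContinuousOn f' (Ici 0))
    (hg : ContinuousOn g (Ici 0)) (hg' : ContinuousOn g' (Ici 0))
    (hfd : ∀ x ∈ Ioi (0:ℝ), HasDerivAt f (f' x) x)
    (hgd : ∀ x ∈ Ioi (0:ℝ), HasDerivAt g (g' x) x)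
    {u : ℝ} (hu : 0 < u) :
    HasDerivAt (conv f g) (f 0 * g u + conv f' g u) u := by
  have hu0 : (0:ℝ) ≤ u := hu.le
  have h2u : (0:ℝ) ≤ 2*u := by linarith
  -- bounds on [0, 2u]
  obtain ⟨Cf, hCf⟩ := (isCompact_Icc (a := (0:ℝ)) (b := 2*u)).exists_bound_of_continuousOn
    (hf.mono (Icc_subset_Ici_self))
  obtain ⟨Cf', hCf'⟩ := (isCompact_Icc (a := (0:ℝ)) (b := 2*u)).exists_bound_of_continuousOn
    (hf'.mono (Icc_subset_Ici_self))
  obtain ⟨Cg, hCg⟩ := (isCompact_Icc (a := (0:ℝ)) (b := 2*u)).exists_bound_of_continuousOn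
    (hg.mono (Icc_subset_Ici_self))
  obtain ⟨Cg', hCg'⟩ := (isCompact_Icc (a := (0:ℝ)) (b := 2*u)).exists_bound_of_continuousOn
    (hg'.mono (Icc_subset_Ici_self))
  have hCf0 : 0 ≤ Cf := le_trans (norm_nonneg _) (hCf 0 ⟨le_refl _, h2u⟩)
  have hCf'0 : 0 ≤ Cf' := le_trans (norm_nonneg _) (hCf' 0 ⟨le_refl _, h2u⟩)
  have hCg0 : 0 ≤ Cg := le_trans (norm_nonneg _) (hCg 0 ⟨le_refl _, h2u⟩)
  have hCg'0 : 0 ≤ Cg' := le_trans (norm_nonneg _) (hCg' 0 ⟨le_refl _, h2u⟩)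
  set F : ℝ → ℝ → ℝ := fun x σ => x * (f (x - x*σ) * g (x*σ)) with hF
  set F' : ℝ → ℝ → ℝ := fun x σ =>
    1 * (f (x - x*σ) * g (x*σ)) +
      x * ((f' (x - x*σ) * (1 - 1*σ)) * g (x*σ) + f (x - x*σ) * (g' (x*σ) * (1*σ))) with hF'
  have hball : ∀ x ∈ Metric.ball u (u/2), 0 < x ∧ x ≤ 2*u := by
    intro x hx
    rw [Metric.mem_ball, Real.dist_eq, abs_lt] at hx
    constructor <;> linarith [hx.1, hx.2]
  -- memberships for arguments
  have hmem : ∀ x, 0 < x → x ≤ 2*u → ∀ σ ∈ Ioc (0:ℝ) 1,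
      (x - x*σ ∈ Icc 0 (2*u)) ∧ (x*σ ∈ Icc 0 (2*u)) := by
    intro x hx1 hx2 σ hσ
    have h1 : 0 < σ := hσ.1
    have h2 : σ ≤ 1 := hσ.2
    refine ⟨⟨by nlinarith, by nlinarith⟩, ⟨by positivity, by nlinarith⟩⟩
  have key := intervalIntegral.hasDerivAt_integral_of_dominated_loc_of_deriv_le
    (F := F) (F' := F') (x₀ := u) (a := 0) (b := 1) (μ := volume)
    (bound := fun _ => Cf*Cg + 2*u*(Cf'*Cg + Cf*Cg'))
    (Metric.ball_mem_nhds u (half_pos hu)) ?_ ?_ ?_ ?_ ?_ ?_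
  · -- use key to conclude
    obtain ⟨-, hder⟩ := key
    have heq : conv f g =ᶠ[𝓝 u] (fun x => ∫ σ in (0:ℝ)..1, F x σ) := by
      filter_upwards [isOpen_Ioi.mem_nhds hu] with x (hx : 0 < x)
      exact conv_eq_scaled hx
    have hder2 : HasDerivAt (conv f g) (∫ σ in (0:ℝ)..1, F' u σ) u :=
      hder.congr_of_eventuallyEq heq
    -- now identify the value
    set φ : ℝ → ℝ := fun σ => σ * (f (u - u*σ) * g (u*σ)) with hφ
    set φ' : ℝ → ℝ := fun σ =>
      1 * (f (u - u*σ) * g (u*σ)) +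
        σ * ((f' (u - u*σ) * -(u*1)) * g (u*σ) + f (u - u*σ) * (g' (u*σ) * (u*1))) with hφ'
    have hφcont : ContinuousOn φ (Icc 0 1) :=
      continuousOn_id.mul ((comp_contOn1 hf hu0).mul (comp_contOn2 hg hu0))
    have hφ'cont : ContinuousOn φ' (Icc 0 1) := by
      apply ContinuousOn.add
      · exact continuousOn_const.mul ((comp_contOn1 hf hu0).mul (comp_contOn2 hg hu0))
      · exact continuousOn_id.mul
          ((((comp_contOn1 hf' hu0).mul continuousOn_const).mul (comp_contOn2 hg hu0)).add
            ((comp_contOn1 hf hu0).mul ((comp_contOn2 hg' hu0).mul continuousOn_const)))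
    have hF'ucont : ContinuousOn (F' u) (Icc 0 1) := by
      apply ContinuousOn.add
      · exact continuousOn_const.mul ((comp_contOn1 hf hu0).mul (comp_contOn2 hg hu0))
      · exact continuousOn_const.mul
          ((((comp_contOn1 hf' hu0).mul (by fun_prop)).mul (comp_contOn2 hg hu0)).add
            ((comp_contOn1 hf hu0).mul ((comp_contOn2 hg' hu0).mul (by fun_prop))))
    have φD : ∀ σ ∈ Ioo (0:ℝ) 1, HasDerivAt φ (φ' σ) σ := by
      intro σ hσ
      have hx1 : 0 < u - u*σ := by nlinarith [hσ.1, hσ.2]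
      have hx2 : 0 < u*σ := by nlinarith [hσ.1]
      have hinner1 : HasDerivAt (fun σ : ℝ => u - u*σ) (-(u*1)) σ :=
        HasDerivAt.const_sub u ((hasDerivAt_id σ).const_mul u)
      have hinner2 : HasDerivAt (fun σ : ℝ => u*σ) (u*1) σ :=
        (hasDerivAt_id σ).const_mul u
      have hcf : HasDerivAt (fun σ : ℝ => f (u - u*σ)) (f' (u - u*σ) * -(u*1)) σ :=
        (hfd _ hx1).comp σ hinner1
      have hcg : HasDerivAt (fun σ : ℝ => g (u*σ)) (g' (u*σ) * (u*1)) σ :=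
        (hgd _ hx2).comp σ hinner2
      exact (hasDerivAt_id σ).mul (hcf.mul hcg)
    have hφ'int : IntervalIntegrable φ' volume 0 1 := contOn01_ii hφ'cont
    have hF'uint : IntervalIntegrable (F' u) volume 0 1 := contOn01_ii hF'ucont
    have hFTC : ∫ σ in (0:ℝ)..1, φ' σ = φ 1 - φ 0 :=
      intervalIntegral.integral_eq_sub_of_hasDeriv_right_of_le zero_le_one hφcont
        (fun σ hσ => (φD σ hσ).hasDerivWithinAt) hφ'int
    have hφ1 : φ 1 - φ 0 = f 0 * g u := by
      simp [hφ]
    have hdiffint : ∫ σ in (0:ℝ)..1, (F' u σ - φ' σ) =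
        (∫ σ in (0:ℝ)..1, F' u σ) - ∫ σ in (0:ℝ)..1, φ' σ :=
      intervalIntegral.integral_sub hF'uint hφ'int
    have hptwise : ∀ σ : ℝ, F' u σ - φ' σ = u * (f' (u - u*σ) * g (u*σ)) := by
      intro σ
      simp only [hF', hφ']
      ring
    have hconv : ∫ σ in (0:ℝ)..1, (F' u σ - φ' σ) = conv f' g u := by
      rw [conv_eq_scaled hu]
      apply intervalIntegral.integral_congr
      intro σ _
      exact hptwise σ
    have hval : ∫ σ in (0:ℝ)..1, F' u σ = f 0 * g u + conv f' g u := by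
      have := hdiffint
      rw [hconv, hFTC, hφ1] at this
      linarith
    rwa [hval] at hder2
  · -- hF_meas
    filter_upwards [isOpen_Ioi.mem_nhds hu] with x (hx : 0 < x)
    exact contOn01_aesm
      (continuousOn_const.mul ((comp_contOn1 hf hx.le).mul (comp_contOn2 hg hx.le)))
  · -- hF_int
    exact contOn01_ii
      (continuousOn_const.mul ((comp_contOn1 hf hu0).mul (comp_contOn2 hg hu0)))
  · -- hF'_meas
    apply contOn01_aesm
    apply ContinuousOn.add
    · exact continuousOn_const.mul ((comp_contOn1 hf hu0).mul (comp_contOn2 hg hu0))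
    · exact continuousOn_const.mul
        ((((comp_contOn1 hf' hu0).mul (by fun_prop)).mul (comp_contOn2 hg hu0)).add
          ((comp_contOn1 hf hu0).mul ((comp_contOn2 hg' hu0).mul (by fun_prop))))
  · -- h_bound
    apply ae_of_all
    intro σ hσ x hx
    rw [uIoc_of_le (zero_le_one)] at hσ
    obtain ⟨hx1, hx2⟩ := hball x hx
    obtain ⟨hm1, hm2⟩ := hmem x hx1 hx2 σ hσ
    have hσ0 : 0 ≤ σ := hσ.1.le
    have hσ1 : σ ≤ 1 := hσ.2
    have e1 : |f (x - x*σ)| ≤ Cf := hCf _ hm1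
    have e2 : |g (x*σ)| ≤ Cg := hCg _ hm2
    have e3 : |f' (x - x*σ)| ≤ Cf' := hCf' _ hm1
    have e4 : |g' (x*σ)| ≤ Cg' := hCg' _ hm2
    have habs : ∀ y : ℝ, |y| ≤ Cf*Cg + 2*u*(Cf'*Cg + Cf*Cg') →
        ‖y‖ ≤ Cf*Cg + 2*u*(Cf'*Cg + Cf*Cg') := fun y h => h
    apply habs
    have t1 : |f (x - x*σ) * g (x*σ)| ≤ Cf * Cg := by
      rw [abs_mul]; exact mul_le_mul e1 e2 (abs_nonneg _) hCf0
    have t2 : |(f' (x - x*σ) * (1 - 1*σ)) * g (x*σ)| ≤ Cf' * Cg := by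
      rw [abs_mul, abs_mul]
      have : |1 - 1*σ| ≤ 1 := by rw [abs_le]; constructor <;> linarith
      calc |f' (x - x*σ)| * |1 - 1*σ| * |g (x*σ)| ≤ Cf' * 1 * Cg := by
            apply mul_le_mul (mul_le_mul e3 this (abs_nonneg _) hCf'0) e2 (abs_nonneg _)
              (by positivity)
        _ = Cf' * Cg := by ring
    have t3 : |f (x - x*σ) * (g' (x*σ) * (1*σ))| ≤ Cf * Cg' := by
      rw [abs_mul, abs_mul]
      have h1σ : |1*σ| ≤ 1 := by rw [abs_le]; constructor <;> linarith
      calc |f (x - x*σ)| * (|g' (x*σ)| * |1*σ|) ≤ Cf * (Cg' * 1) := by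
            apply mul_le_mul e1 (mul_le_mul e4 h1σ (abs_nonneg _) hCg'0) (by positivity) hCf0
        _ = Cf * Cg' := by ring
    calc |F' x σ| ≤ |1 * (f (x - x*σ) * g (x*σ))| +
          |x * ((f' (x - x*σ) * (1 - 1*σ)) * g (x*σ) + f (x - x*σ) * (g' (x*σ) * (1*σ)))| :=
            abs_add_le _ _
      _ ≤ Cf*Cg + 2*u*(Cf'*Cg + Cf*Cg') := by
          apply add_le_add
          · rw [one_mul]; exact t1
          · rw [abs_mul, abs_of_pos hx1]
            apply mul_le_mul hx2 (le_trans (abs_add_le _ _) (add_le_add t2 t3)) (abs_nonneg _)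
              (by linarith)
  · -- bound integrable
    exact intervalIntegrable_const
  · -- h_diff
    filter_upwards [ae_ne_one] with σ hσne
    intro hσ x hx
    rw [uIoc_of_le (zero_le_one)] at hσ
    have hσo : σ ∈ Ioo (0:ℝ) 1 := ⟨hσ.1, lt_of_le_of_ne hσ.2 hσne⟩
    obtain ⟨hx1, hx2⟩ := hball x hx
    have ha1 : 0 < x - x*σ := by nlinarith [hσo.1, hσo.2]
    have ha2 : 0 < x*σ := by nlinarith [hσo.1]
    have hinner1 : HasDerivAt (fun x : ℝ => x - x*σ) (1 - 1*σ) x :=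
      (hasDerivAt_id x).sub ((hasDerivAt_id x).mul_const σ)
    have hinner2 : HasDerivAt (fun x : ℝ => x*σ) (1*σ) x :=
      (hasDerivAt_id x).mul_const σ
    have hcf : HasDerivAt (fun x : ℝ => f (x - x*σ)) (f' (x - x*σ) * (1 - 1*σ)) x :=
      (hfd _ ha1).comp x hinner1
    have hcg : HasDerivAt (fun x : ℝ => g (x*σ)) (g' (x*σ) * (1*σ)) x :=
      (hgd _ ha2).comp x hinner2
    exact (hasDerivAt_id x).mul (hcf.mul hcg)

end core

section hier

variable {M : ℝ → ℝ} (hM : ContDiffOn ℝ (⊤ : ℕ∞) M (Set.Ici 0))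
include hM

lemma D_cont (l : ℕ) : ContinuousOn (iteratedDerivWithin l M (Ici 0)) (Ici 0) :=
  hM.continuousOn_iteratedDerivWithin (by exact_mod_cast le_top (a := (l:ℕ∞))) (uniqueDiffOn_Ici 0)

lemma D_hasDerivAt (l : ℕ) {x : ℝ} (hx : 0 < x) :
    HasDerivAt (iteratedDerivWithin l M (Ici 0)) (iteratedDerivWithin (l+1) M (Ici 0) x) x := by
  have hd : DifferentiableWithinAt ℝ (iteratedDerivWithin l M (Ici 0)) (Ici 0) x :=
    (hM.differentiableOn_iteratedDerivWithin (by exact_mod_cast ENat.coe_lt_top l)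
      (uniqueDiffOn_Ici 0)) x hx.le
  have hnh : Ici (0:ℝ) ∈ 𝓝 x := Ici_mem_nhds hx
  have heq : iteratedDerivWithin (l+1) M (Ici 0) x = deriv (iteratedDerivWithin l M (Ici 0)) x := by
    rw [iteratedDerivWithin_succ, derivWithin_of_mem_nhds hnh]
  rw [heq]
  exact (hd.differentiableAt hnh).hasDerivAt

/-- sup of `|M⁽ˡ⁾|` on `[0,T]` -/
noncomputable def SS (M : ℝ → ℝ) (T : ℝ) (l : ℕ) : ℝ :=
  ⨆ τ : Icc (0:ℝ) T, |iteratedDerivWithin l M (Ici 0) τ|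

lemma D_le_S {T : ℝ} (l : ℕ) {x : ℝ} (hx : x ∈ Icc 0 T) :
    |iteratedDerivWithin l M (Ici 0) x| ≤ SS M T l := by
  have hbd : BddAbove (Set.range fun τ : Icc (0:ℝ) T => |iteratedDerivWithin l M (Ici 0) τ|) := by
    obtain ⟨C, hC⟩ := isCompact_Icc.exists_bound_of_continuousOn
      ((D_cont hM l).mono (Icc_subset_Ici_self))
    refine ⟨C, ?_⟩
    rintro y ⟨τ, rfl⟩
    exact hC τ.1 τ.2
  exact le_ciSup hbd (⟨x, hx⟩ : Icc (0:ℝ) T)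

lemma S_nonneg {T : ℝ} (hT : 0 ≤ T) (l : ℕ) : 0 ≤ SS M T l :=
  le_trans (abs_nonneg _) (D_le_S hM l ⟨le_refl 0, hT⟩)

lemma convPow_contOn (j : ℕ) : ContinuousOn (convPow M j) (Ici 0) := by
  induction j with
  | zero => exact continuousOn_const
  | succ j ih =>
    cases j with
    | zero => exact hM.continuousOn
    | succ j => exact conv_continuousOn hM.continuousOn ih

lemma convPow_le {T : ℝ} (hT : 0 ≤ T) (j : ℕ) :
    ∀ u ∈ Icc (0:ℝ) T, |convPow M (j+1) u| ≤ SS M T 0 ^ (j+1) * u^j / (j.factorial : ℝ) := by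
  induction j with
  | zero =>
    intro u hu
    have : |convPow M 1 u| = |iteratedDerivWithin 0 M (Ici 0) u| := by
      rw [iteratedDerivWithin_zero]
      rfl
    rw [this]
    simpa using D_le_S hM 0 hu
  | succ j ih =>
    intro u hu
    have hu0 : (0:ℝ) ≤ u := hu.1
    have huT : u ≤ T := hu.2
    have hS0 : 0 ≤ SS M T 0 := S_nonneg hM hT 0
    have hshow : convPow M (j+2) u = ∫ s in (0:ℝ)..u, M (u - s) * convPow M (j+1) s := rfl
    have hb : ∀ᵐ s ∂volume.restrict (Ι 0 u), ‖M (u - s) * convPow M (j+1) s‖ ≤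
        SS M T 0 ^ (j+2) * s^j / (j.factorial : ℝ) := by
      rw [ae_restrict_iff' measurableSet_uIoc]
      apply ae_of_all
      intro s hs
      rw [uIoc_of_le hu0] at hs
      have hs0 : 0 < s := hs.1
      have hsu : s ≤ u := hs.2
      have h1 : u - s ∈ Icc (0:ℝ) T := ⟨by linarith, by linarith⟩
      have h2 : s ∈ Icc (0:ℝ) T := ⟨hs0.le, by linarith⟩
      have e1 : |M (u - s)| ≤ SS M T 0 := by
        have := D_le_S hM (T := T) 0 h1
        rwa [iteratedDerivWithin_zero] at this
      have e2 : |convPow M (j+1) s| ≤ SS M T 0 ^ (j+1) * s^j / (j.factorial : ℝ) := ih s h2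
      calc ‖M (u - s) * convPow M (j+1) s‖ = |M (u - s)| * |convPow M (j+1) s| := abs_mul _ _
        _ ≤ SS M T 0 * (SS M T 0 ^ (j+1) * s^j / (j.factorial : ℝ)) :=
            mul_le_mul e1 e2 (abs_nonneg _) hS0
        _ = SS M T 0 ^ (j+2) * s^j / (j.factorial : ℝ) := by ring
    have hbi : IntervalIntegrable (fun s => SS M T 0 ^ (j+2) * s^j / (j.factorial : ℝ))
        volume 0 u :=
      (by fun_prop : Continuous fun s : ℝ => SS M T 0 ^ (j+2) * s^j / (j.factorial : ℝ)).intervalIntegrable 0 u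
    have := intervalIntegral.norm_integral_le_abs_of_norm_le hb hbi
    rw [hshow]
    apply le_trans this
    have hval : ∫ s in (0:ℝ)..u, SS M T 0 ^ (j+2) * s^j / (j.factorial : ℝ) =
        SS M T 0 ^ (j+2) * u^(j+1) / ((j+1).factorial : ℝ) := by
      have : (fun s : ℝ => SS M T 0 ^ (j+2) * s^j / (j.factorial : ℝ)) =
          fun s : ℝ => (SS M T 0 ^ (j+2) / (j.factorial : ℝ)) * s^j := by
        funext s; ring
      rw [this, intervalIntegral.integral_const_mul, integral_pow]
      rw [Nat.factorial_succ]
      have hj : ((j.factorial : ℝ)) ≠ 0 := Nat.cast_ne_zero.2 j.factorial_ne_zero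
      have hj1 : ((j:ℝ) + 1) ≠ 0 := by positivity
      rw [zero_pow (Nat.succ_ne_zero j), sub_zero]
      push_cast
      field_simp
    rw [hval, abs_of_nonneg (by positivity)]

end hier

noncomputable def AA (M : ℝ → ℝ) (T : ℝ) (N : ℕ) : ℝ :=
  ∑ l ∈ Finset.range (N+1), SS M T l

section hier

variable {M : ℝ → ℝ} (hM : ContDiffOn ℝ (⊤ : ℕ∞) M (Set.Ici 0))

include hM

/-- generic bound for a convolution against a power-bounded function -/
lemma conv_integral_bound {f g : ℝ → ℝ} {T C D : ℝ} {j : ℕ}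
    (hf0 : ContinuousOn f (Ici 0)) (hg0 : ContinuousOn g (Ici 0))
    (hC : 0 ≤ C) (hD : 0 ≤ D)
    (hf : ∀ x ∈ Icc (0:ℝ) T, |f x| ≤ C)
    (hg : ∀ x ∈ Icc (0:ℝ) T, |g x| ≤ D * x^j / (j.factorial : ℝ)) :
    ∀ u ∈ Icc (0:ℝ) T, |conv f g u| ≤ C * D * u^(j+1) / ((j+1).factorial : ℝ) := by
  intro u hu
  have hu0 : (0:ℝ) ≤ u := hu.1
  have huT : u ≤ T := hu.2
  have hb : ∀ᵐ s ∂volume.restrict (Ι 0 u), ‖f (u - s) * g s‖ ≤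
      C * D * s^j / (j.factorial : ℝ) := by
    rw [ae_restrict_iff' measurableSet_uIoc]
    apply ae_of_all
    intro s hs
    rw [uIoc_of_le hu0] at hs
    have hs0 : 0 < s := hs.1
    have hsu : s ≤ u := hs.2
    have h1 : u - s ∈ Icc (0:ℝ) T := ⟨by linarith, by linarith⟩
    have h2 : s ∈ Icc (0:ℝ) T := ⟨hs0.le, by linarith⟩
    calc ‖f (u - s) * g s‖ = |f (u - s)| * |g s| := abs_mul _ _
      _ ≤ C * (D * s^j / (j.factorial : ℝ)) :=
          mul_le_mul (hf _ h1) (hg _ h2) (abs_nonneg _) hC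
      _ = C * D * s^j / (j.factorial : ℝ) := by ring
  have hbi : IntervalIntegrable (fun s => C * D * s^j / (j.factorial : ℝ)) volume 0 u :=
    (by fun_prop : Continuous fun s : ℝ => C * D * s^j / (j.factorial : ℝ)).intervalIntegrable 0 u
  have hkey := intervalIntegral.norm_integral_le_abs_of_norm_le hb hbi
  apply le_trans hkey
  have hval : ∫ s in (0:ℝ)..u, C * D * s^j / (j.factorial : ℝ) =
      C * D * u^(j+1) / ((j+1).factorial : ℝ) := by
    have h1 : (fun s : ℝ => C * D * s^j / (j.factorial : ℝ)) =
        fun s : ℝ => (C * D / (j.factorial : ℝ)) * s^j := by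
      funext s; ring
    rw [h1, intervalIntegral.integral_const_mul, integral_pow]
    rw [Nat.factorial_succ]
    have hj : ((j.factorial : ℝ)) ≠ 0 := Nat.cast_ne_zero.2 j.factorial_ne_zero
    have hj1 : ((j:ℝ) + 1) ≠ 0 := by positivity
    rw [zero_pow (Nat.succ_ne_zero j), sub_zero]
    push_cast
    field_simp
  rw [hval, abs_of_nonneg (by positivity)]

end hier

/-- explicit hierarchy of derivatives of convolution powers -/
noncomputable def Phi (M : ℝ → ℝ) : ℕ → ℕ → ℝ → ℝ
  | 0, _, _ => 0
  | 1, l, u => iteratedDerivWithin l M (Ici 0) u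
  | (j+2), l, u =>
      (∑ i ∈ Finset.range l, iteratedDerivWithin i M (Ici 0) 0 * Phi M (j+1) (l-1-i) u)
      + conv (iteratedDerivWithin l M (Ici 0)) (convPow M (j+1)) u

lemma Phi_zero (M : ℝ → ℝ) (j : ℕ) : Phi M j 0 = convPow M j := by
  funext u
  match j with
  | 0 => rfl
  | 1 =>
    show iteratedDerivWithin 0 M (Ici 0) u = M u
    rw [iteratedDerivWithin_zero]
  | (j+2) =>
    show (∑ i ∈ Finset.range 0, _) + conv (iteratedDerivWithin 0 M (Ici 0)) (convPow M (j+1)) u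
      = convPow M (j+2) u
    rw [Finset.sum_range_zero, iteratedDerivWithin_zero, zero_add]
    rfl

section phier

variable {M : ℝ → ℝ} (hM : ContDiffOn ℝ (⊤ : ℕ∞) M (Set.Ici 0))
include hM

lemma Phi_cont (j : ℕ) : ∀ l, ContinuousOn (Phi M j l) (Ici 0) := by
  induction j with
  | zero => intro l; exact continuousOn_const
  | succ j ih =>
    intro l
    cases j with
    | zero => exact D_cont hM l
    | succ j =>
      show ContinuousOn (fun u => (∑ i ∈ Finset.range l,
        iteratedDerivWithin i M (Ici 0) 0 * Phi M (j+1) (l-1-i) u)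
        + conv (iteratedDerivWithin l M (Ici 0)) (convPow M (j+1)) u) (Ici 0)
      apply ContinuousOn.add
      · apply continuousOn_finset_sum
        intro i _
        exact continuousOn_const.mul (ih (l-1-i))
      · exact conv_continuousOn (D_cont hM l) (convPow_contOn hM (j+1))

lemma Phi_deriv (j : ℕ) : ∀ l, ∀ x ∈ Ioi (0:ℝ), HasDerivAt (Phi M j l) (Phi M j (l+1) x) x := by
  induction j with
  | zero => intro l x _; exact hasDerivAt_const x 0
  | succ j ih =>
    intro l x hx
    cases j with
    | zero => exact D_hasDerivAt hM l hx
    | succ j =>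
      have h1 : HasDerivAt (fun u => ∑ i ∈ Finset.range l,
          iteratedDerivWithin i M (Ici 0) 0 * Phi M (j+1) (l-1-i) u)
          (∑ i ∈ Finset.range l,
            iteratedDerivWithin i M (Ici 0) 0 * Phi M (j+1) (l-1-i+1) x) x :=
        HasDerivAt.fun_sum (fun i _ => (ih (l-1-i) x hx).const_mul _)
      have hgd : ∀ y ∈ Ioi (0:ℝ), HasDerivAt (convPow M (j+1)) (Phi M (j+1) 1 y) y := by
        intro y hy
        rw [← Phi_zero M (j+1)]
        exact ih 0 y hy
      have h2 : HasDerivAt (conv (iteratedDerivWithin l M (Ici 0)) (convPow M (j+1)))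
          (iteratedDerivWithin l M (Ici 0) 0 * convPow M (j+1) x +
            conv (iteratedDerivWithin (l+1) M (Ici 0)) (convPow M (j+1)) x) x :=
        conv_hasDerivAt (D_cont hM l) (D_cont hM (l+1)) (convPow_contOn hM (j+1))
          (by rw [← Phi_zero M (j+1)] at *; exact Phi_cont hM (j+1) 1)
          (fun y hy => D_hasDerivAt hM l hy) hgd hx
      have hsum := h1.fun_add h2
      have hfun : (fun u => (∑ i ∈ Finset.range l,
          iteratedDerivWithin i M (Ici 0) 0 * Phi M (j+1) (l-1-i) u)
          + conv (iteratedDerivWithin l M (Ici 0)) (convPow M (j+1)) u) = Phi M (j+2) l := rfl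
      rw [hfun] at hsum
      refine hsum.congr_deriv (Eq.symm ?_)
      show Phi M (j+2) (l+1) x = _
      show (∑ i ∈ Finset.range (l+1),
          iteratedDerivWithin i M (Ici 0) 0 * Phi M (j+1) (l+1-1-i) x)
          + conv (iteratedDerivWithin (l+1) M (Ici 0)) (convPow M (j+1)) x = _
      rw [Finset.sum_range_succ]
      have e1 : ∀ i ∈ Finset.range l, iteratedDerivWithin i M (Ici 0) 0 * Phi M (j+1) (l+1-1-i) x
          = iteratedDerivWithin i M (Ici 0) 0 * Phi M (j+1) (l-1-i+1) x := by
        intro i hi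
        have : l+1-1-i = l-1-i+1 := by
          have := Finset.mem_range.1 hi
          omega
        rw [this]
      rw [Finset.sum_congr rfl e1]
      have e2 : l+1-1-l = 0 := by omega
      rw [e2, Phi_zero M (j+1)]
      ring

end phier

/-- the inductive bound -/
noncomputable def beta (A T : ℝ) (j l : ℕ) : ℝ :=
  A^j * ∑ i ∈ Finset.range (min l (j-1) + 1), T^(j-1-i) / (((j-1-i).factorial : ℕ) : ℝ)

lemma beta_nonneg {A T : ℝ} (hA : 0 ≤ A) (hT : 0 ≤ T) (j l : ℕ) : 0 ≤ beta A T j l := by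
  unfold beta
  apply mul_nonneg (by positivity)
  apply Finset.sum_nonneg
  intro i _
  positivity

lemma beta_mono {A T : ℝ} (hA : 0 ≤ A) (hT : 0 ≤ T) (j : ℕ) {l l' : ℕ} (h : l' ≤ l) :
    beta A T j l' ≤ beta A T j l := by
  unfold beta
  apply mul_le_mul_of_nonneg_left ?_ (by positivity)
  apply Finset.sum_le_sum_of_subset_of_nonneg
  · apply Finset.range_subset_range.2
    omega
  · intro i _ _
    positivity

lemma beta_zero_eval (A T : ℝ) (l : ℕ) : beta A T 0 l = 1 := by
  unfold beta
  simp

lemma beta_one_eval (A T : ℝ) (l : ℕ) : beta A T 1 l = A := by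
  unfold beta
  simp

lemma beta_bot_eval (A T : ℝ) (j : ℕ) : beta A T (j+2) 0 =
    A^(j+2) * (T^(j+1) / (((j+1).factorial : ℕ) : ℝ)) := by
  unfold beta
  simp

lemma beta_succ_eval (A T : ℝ) (j : ℕ) {l : ℕ} (hl : 1 ≤ l) :
    beta A T (j+2) l = A^(j+2) * (T^(j+1) / (((j+1).factorial : ℕ) : ℝ))
      + A * beta A T (j+1) (l-1) := by
  unfold beta
  have hl' : l = (l-1)+1 := by omega
  have hmin : min l (j+2-1) = min (l-1) (j+1-1) + 1 := by
    rw [show j+2-1 = j+1 from rfl, show j+1-1 = j from rfl]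
    conv_lhs => rw [hl']
    exact Nat.succ_min_succ _ _
  rw [hmin]
  rw [Finset.sum_range_succ' (fun i => T^(j+2-1-i) / (((j+2-1-i).factorial : ℕ) : ℝ))
    (min (l-1) (j+1-1) + 1)]
  have e1 : ∀ i : ℕ, j+2-1-(i+1) = j+1-1-i := by intro i; omega
  have e2 : j+2-1-0 = j+1 := by omega
  simp only [e1, e2]
  ring

section pbound

variable {M : ℝ → ℝ} (hM : ContDiffOn ℝ (⊤ : ℕ∞) M (Set.Ici 0))
variable {T : ℝ} {N : ℕ}
include hM

lemma S_le_A (hT : 0 ≤ T) {l : ℕ} (hl : l ≤ N) : SS M T l ≤ AA M T N := by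
  apply Finset.single_le_sum (f := fun i => SS M T i)
  · intro i _
    exact S_nonneg hM hT i
  · exact Finset.mem_range.2 (by omega)

lemma A_nonneg (hT : 0 ≤ T) : 0 ≤ AA M T N :=
  Finset.sum_nonneg fun i _ => S_nonneg hM hT i

lemma Phi_bound (hT : 0 ≤ T) :
    ∀ j, ∀ l ≤ N, ∀ u ∈ Icc (0:ℝ) T, |Phi M j l u| ≤ beta (AA M T N) T j l := by
  have hA : 0 ≤ AA M T N := A_nonneg hM (N := N) hT
  intro j
  induction j with
  | zero =>
    intro l _ u _
    rw [beta_zero_eval]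
    show |(0:ℝ)| ≤ 1
    simp
  | succ j ih =>
    intro l hl u hu
    cases j with
    | zero =>
      rw [beta_one_eval]
      exact le_trans (D_le_S hM l hu) (S_le_A hM hT hl)
    | succ j =>
      have hbd1 : |∑ i ∈ Finset.range l,
          iteratedDerivWithin i M (Ici 0) 0 * Phi M (j+1) (l-1-i) u|
          ≤ AA M T N * beta (AA M T N) T (j+1) (l-1) := by
        calc |∑ i ∈ Finset.range l, iteratedDerivWithin i M (Ici 0) 0 * Phi M (j+1) (l-1-i) u|
            ≤ ∑ i ∈ Finset.range l, |iteratedDerivWithin i M (Ici 0) 0 * Phi M (j+1) (l-1-i) u| :=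
              Finset.abs_sum_le_sum_abs _ _
          _ ≤ ∑ i ∈ Finset.range l, SS M T i * beta (AA M T N) T (j+1) (l-1) := by
              apply Finset.sum_le_sum
              intro i hi
              rw [abs_mul]
              apply mul_le_mul (D_le_S hM i ⟨le_refl 0, hT⟩)
                (le_trans (ih (l-1-i) (by omega) u hu)
                  (beta_mono hA hT (j+1) (by omega)))
                (abs_nonneg _) (S_nonneg hM hT i)
          _ = (∑ i ∈ Finset.range l, SS M T i) * beta (AA M T N) T (j+1) (l-1) := by
              rw [Finset.sum_mul]
          _ ≤ AA M T N * beta (AA M T N) T (j+1) (l-1) := by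
              apply mul_le_mul_of_nonneg_right ?_ (beta_nonneg hA hT _ _)
              apply Finset.sum_le_sum_of_subset_of_nonneg (Finset.range_subset_range.2 (by omega))
              intro i _ _
              exact S_nonneg hM hT i
      have hbd2 : |conv (iteratedDerivWithin l M (Ici 0)) (convPow M (j+1)) u|
          ≤ AA M T N ^ (j+2) * (T^(j+1) / (((j+1).factorial : ℕ) : ℝ)) := by
        have h := conv_integral_bound hM (D_cont hM l) (convPow_contOn hM (j+1))
          (S_nonneg hM hT l) (pow_nonneg (S_nonneg hM hT 0) (j+1))
          (fun x hx => D_le_S hM l hx) (convPow_le hM hT j) u hu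
        apply le_trans h
        have h1 : SS M T l * SS M T 0 ^ (j+1) ≤ AA M T N ^ (j+2) := by
          calc SS M T l * SS M T 0 ^ (j+1) ≤ AA M T N * AA M T N ^ (j+1) := by
                apply mul_le_mul (S_le_A hM hT hl)
                  (pow_le_pow_left₀ (S_nonneg hM hT 0) (S_le_A hM hT (by omega)) (j+1))
                  (pow_nonneg (S_nonneg hM hT 0) (j+1)) hA
            _ = AA M T N ^ (j+2) := by ring
        have h2 : u ^ (j+1) ≤ T ^ (j+1) := pow_le_pow_left₀ hu.1 hu.2 (j+1)
        have hfac : (0:ℝ) < (((j+1).factorial : ℕ) : ℝ) := by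
          exact_mod_cast Nat.factorial_pos (j+1)
        calc SS M T l * SS M T 0 ^ (j+1) * u^(j+1) / (((j+1).factorial : ℕ) : ℝ)
            ≤ AA M T N ^ (j+2) * T^(j+1) / (((j+1).factorial : ℕ) : ℝ) := by
              apply div_le_div_of_nonneg_right
                (mul_le_mul h1 h2 (pow_nonneg hu.1 (j+1)) (pow_nonneg hA (j+2))) hfac.le
          _ = AA M T N ^ (j+2) * (T^(j+1) / (((j+1).factorial : ℕ) : ℝ)) := by ring
      have htot : |Phi M (j+2) l u| ≤ AA M T N * beta (AA M T N) T (j+1) (l-1)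
          + AA M T N ^ (j+2) * (T^(j+1) / (((j+1).factorial : ℕ) : ℝ)) := by
        have : Phi M (j+2) l u = (∑ i ∈ Finset.range l,
            iteratedDerivWithin i M (Ici 0) 0 * Phi M (j+1) (l-1-i) u)
            + conv (iteratedDerivWithin l M (Ici 0)) (convPow M (j+1)) u := rfl
        rw [this]
        exact le_trans (abs_add_le _ _) (add_le_add hbd1 hbd2)
      rcases Nat.eq_zero_or_pos l with hl0 | hl1
      · subst hl0
        rw [beta_bot_eval]
        have hzero : Phi M (j+2) 0 u
            = conv (iteratedDerivWithin 0 M (Ici 0)) (convPow M (j+1)) u := by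
          show (∑ i ∈ Finset.range 0, _) + _ = _
          rw [Finset.sum_range_zero, zero_add]
        rw [hzero]
        exact hbd2
      · rw [beta_succ_eval _ _ _ hl1]
        linarith [htot]

end pbound

lemma beta_le_exp {A T : ℝ} (hA : 0 ≤ A) (hT : 0 ≤ T) (j l : ℕ) :
    beta A T j l ≤ A^j * Real.exp T := by
  unfold beta
  apply mul_le_mul_of_nonneg_left ?_ (by positivity)
  set c := j - 1 with hc
  have hsub : ∀ i ∈ Finset.range (min l c + 1), i ≤ c := by
    intro i hi
    have := Finset.mem_range.1 hi
    omega
  have himg : ∑ i ∈ Finset.range (min l c + 1), T^(c-i) / (((c-i).factorial : ℕ) : ℝ)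
      = ∑ a ∈ (Finset.range (min l c + 1)).image (fun i => c - i),
          T^a / ((a.factorial : ℕ) : ℝ) := by
    rw [Finset.sum_image]
    intro i hi i' hi' h
    have h1 := hsub i hi
    have h2 := hsub i' hi'
    dsimp only at h
    omega
  rw [himg]
  have hsubset : (Finset.range (min l c + 1)).image (fun i => c - i) ⊆ Finset.range (c+1) := by
    intro a ha
    obtain ⟨i, hi, rfl⟩ := Finset.mem_image.1 ha
    exact Finset.mem_range.2 (by omega)
  apply le_trans (Finset.sum_le_sum_of_subset_of_nonneg hsubset (fun i _ _ => by positivity))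
  exact_mod_cast Real.sum_le_exp_of_nonneg hT (c+1)

lemma choose_mul_fact_le {m k j N : ℕ} (hm : m ≤ N) (hk : k ≤ j) (hN : 1 ≤ N) :
    (m.choose k) * k.factorial ≤ N^j := by
  rcases le_or_gt k m with h | h
  · calc m.choose k * k.factorial = m.descFactorial k := by
          rw [Nat.descFactorial_eq_factorial_mul_choose, mul_comm]
      _ ≤ m^k := Nat.descFactorial_le_pow m k
      _ ≤ N^k := Nat.pow_le_pow_left hm k
      _ ≤ N^j := Nat.pow_le_pow_right hN hk
  · rw [Nat.choose_eq_zero_of_lt h, zero_mul]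
    exact Nat.zero_le _

lemma term_choose_bound {T : ℝ} (hT : 0 ≤ T) {N m j k : ℕ} (hm : m ≤ N) (hN : 1 ≤ N)
    (hk : k ≤ j) :
    (m.choose k : ℝ) * (T^(j-k)/(((j-k).factorial : ℕ) : ℝ))
      ≤ (N:ℝ)^j * (j.choose k : ℝ) * T^(j-k) / ((j.factorial : ℕ) : ℝ) := by
  have hfj : (0:ℝ) < ((j.factorial : ℕ) : ℝ) := by exact_mod_cast j.factorial_pos
  have hfjk : (0:ℝ) < (((j-k).factorial : ℕ) : ℝ) := by exact_mod_cast (j-k).factorial_pos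
  rw [← mul_div_assoc, div_le_div_iff₀ hfjk hfj]
  have hnat : (m.choose k) * (j.factorial) ≤ N^j * (j.choose k * (j-k).factorial) := by
    calc m.choose k * j.factorial
        = m.choose k * (j.choose k * k.factorial * (j-k).factorial) := by
          rw [Nat.choose_mul_factorial_mul_factorial hk]
      _ = (m.choose k * k.factorial) * (j.choose k * (j-k).factorial) := by ring
      _ ≤ N^j * (j.choose k * (j-k).factorial) :=
          Nat.mul_le_mul_right _ (choose_mul_fact_le hm hk hN)
  calc (m.choose k : ℝ) * (T^(j-k)) * ((j.factorial : ℕ) : ℝ)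
      = ((m.choose k * j.factorial : ℕ) : ℝ) * T^(j-k) := by push_cast; ring
    _ ≤ ((N^j * (j.choose k * (j-k).factorial) : ℕ) : ℝ) * T^(j-k) := by
        apply mul_le_mul_of_nonneg_right ?_ (by positivity)
        exact_mod_cast hnat
    _ = (N:ℝ)^j * (j.choose k : ℝ) * T^(j-k) * (((j-k).factorial : ℕ) : ℝ) := by
        push_cast; ring

lemma sum_choose_bound {T : ℝ} (hT : 0 ≤ T) {N m j : ℕ} (hm : m ≤ N) (hN : 1 ≤ N) :
    ∑ k ∈ Finset.range (m+1),
        (m.choose k : ℝ) * (if k ≤ j then T^(j-k)/(((j-k).factorial : ℕ) : ℝ) else 0)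
      ≤ (N:ℝ)^j * (1+T)^j / ((j.factorial : ℕ) : ℝ) := by
  set R := max m j with hR
  have hext : ∑ k ∈ Finset.range (m+1),
      (m.choose k : ℝ) * (if k ≤ j then T^(j-k)/(((j-k).factorial : ℕ) : ℝ) else 0)
      = ∑ k ∈ Finset.range (R+1),
        (m.choose k : ℝ) * (if k ≤ j then T^(j-k)/(((j-k).factorial : ℕ) : ℝ) else 0) := by
    apply Finset.sum_subset
    · apply Finset.range_subset_range.2; omega
    · intro k _ hk
      have : m < k := by
        by_contra h
        exact hk (Finset.mem_range.2 (by omega))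
      rw [Nat.choose_eq_zero_of_lt this]
      simp
  have hbin : (N:ℝ)^j * (1+T)^j / ((j.factorial : ℕ) : ℝ)
      = ∑ k ∈ Finset.range (R+1),
        (N:ℝ)^j * (j.choose k : ℝ) * T^(j-k) / ((j.factorial : ℕ) : ℝ) := by
    have h1 : ((1:ℝ)+T)^j = ∑ k ∈ Finset.range (j+1), (1:ℝ)^k * T^(j-k) * (j.choose k : ℝ) :=
      add_pow 1 T j
    have h2 : ∑ k ∈ Finset.range (j+1), (1:ℝ)^k * T^(j-k) * (j.choose k : ℝ)
        = ∑ k ∈ Finset.range (R+1), (1:ℝ)^k * T^(j-k) * (j.choose k : ℝ) := by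
      apply Finset.sum_subset
      · apply Finset.range_subset_range.2; omega
      · intro k _ hk
        have : j < k := by
          by_contra h
          exact hk (Finset.mem_range.2 (by omega))
        rw [Nat.choose_eq_zero_of_lt this]
        simp
    rw [h1, h2, Finset.mul_sum, Finset.sum_div]
    apply Finset.sum_congr rfl
    intro k _
    ring
  rw [hext, hbin]
  apply Finset.sum_le_sum
  intro k _
  by_cases hkj : k ≤ j
  · rw [if_pos hkj]
    exact term_choose_bound hT hm hN hkj
  · rw [if_neg hkj]
    rw [Nat.choose_eq_zero_of_lt (by omega : j < k)]
    simp

lemma mainArith {A T : ℝ} (hA : 0 ≤ A) (hT : 0 ≤ T) {N m j : ℕ} (hm : m ≤ N) (hN : 1 ≤ N) :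
    ∑ k ∈ Finset.range (m+1),
        (m.choose k : ℝ) * (if k ≤ j then T^(j-k)/(((j-k).factorial : ℕ) : ℝ) else 0)
          * beta A T j (m-k)
      ≤ Real.exp T * ((N:ℝ)*(1+T)*A)^j / ((j.factorial : ℕ) : ℝ) := by
  have step1 : ∑ k ∈ Finset.range (m+1),
      (m.choose k : ℝ) * (if k ≤ j then T^(j-k)/(((j-k).factorial : ℕ) : ℝ) else 0)
        * beta A T j (m-k)
      ≤ (∑ k ∈ Finset.range (m+1),
        (m.choose k : ℝ) * (if k ≤ j then T^(j-k)/(((j-k).factorial : ℕ) : ℝ) else 0))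
        * (A^j * Real.exp T) := by
    rw [Finset.sum_mul]
    apply Finset.sum_le_sum
    intro k _
    have hpos : 0 ≤ (m.choose k : ℝ) * (if k ≤ j then T^(j-k)/(((j-k).factorial : ℕ) : ℝ) else 0) := by
      apply mul_nonneg (by positivity)
      split_ifs
      · positivity
      · exact le_refl 0
    exact mul_le_mul_of_nonneg_left (beta_le_exp hA hT j (m-k)) hpos
  apply le_trans step1
  have step2 := sum_choose_bound (j := j) hT hm hN
  calc (∑ k ∈ Finset.range (m+1),
      (m.choose k : ℝ) * (if k ≤ j then T^(j-k)/(((j-k).factorial : ℕ) : ℝ) else 0))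
      * (A^j * Real.exp T)
      ≤ ((N:ℝ)^j * (1+T)^j / ((j.factorial : ℕ) : ℝ)) * (A^j * Real.exp T) := by
        apply mul_le_mul_of_nonneg_right step2 (by positivity)
    _ = Real.exp T * ((N:ℝ)*(1+T)*A)^j / ((j.factorial : ℕ) : ℝ) := by
        rw [mul_pow, mul_pow]
        ring

/-- k-th derivative of `s ↦ (-s)^j/j!` -/
noncomputable def dp (j k : ℕ) (s : ℝ) : ℝ :=
  if k ≤ j then (-1:ℝ)^j * s^(j-k) / (((j-k).factorial : ℕ) : ℝ) else 0

noncomputable def ph (M : ℝ → ℝ) (t : ℝ) (j l : ℕ) (s : ℝ) : ℝ :=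
  (-1:ℝ)^l * Phi M j l (t - s)

noncomputable def TD (M : ℝ → ℝ) (t : ℝ) (j m : ℕ) (s : ℝ) : ℝ :=
  ∑ k ∈ Finset.range (m+1), (m.choose k : ℝ) * (dp j k s * ph M t j (m-k) s)

lemma dp_hasDeriv (j k : ℕ) (s : ℝ) : HasDerivAt (dp j k) (dp j (k+1) s) s := by
  rcases lt_trichotomy k j with h | h | h
  · have h1 : dp j k = fun s : ℝ =>
        ((-1:ℝ)^j / (((j-k).factorial : ℕ) : ℝ)) * s^(j-k) := by
      funext x
      rw [dp, if_pos h.le]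
      ring
    have hjk : j - k = (j - (k+1)) + 1 := by omega
    have h2 : dp j (k+1) s = ((-1:ℝ)^j / (((j-(k+1)).factorial : ℕ) : ℝ)) * s^(j-(k+1)) := by
      rw [dp, if_pos (by omega : k+1 ≤ j)]
      ring
    rw [h1, h2]
    have hd := (hasDerivAt_pow (j-k) s).const_mul ((-1:ℝ)^j / (((j-k).factorial : ℕ) : ℝ))
    refine hd.congr_deriv (Eq.symm ?_)
    rw [hjk]
    have hfz : (((j-(k+1)).factorial : ℕ) : ℝ) ≠ 0 := by
      exact_mod_cast (j-(k+1)).factorial_ne_zero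
    rw [Nat.factorial_succ, Nat.add_sub_cancel]
    push_cast
    field_simp
  · subst h
    have h1 : dp k k = fun _ : ℝ => (-1:ℝ)^k := by
      funext x
      rw [dp, if_pos (le_refl k)]
      simp
    have h2 : dp k (k+1) s = 0 := by
      rw [dp, if_neg (by omega)]
    rw [h1, h2]
    exact hasDerivAt_const s _
  · have h1 : dp j k = fun _ : ℝ => (0:ℝ) := by
      funext x
      rw [dp, if_neg (by omega)]
    have h2 : dp j (k+1) s = 0 := by
      rw [dp, if_neg (by omega)]
    rw [h1, h2]
    exact hasDerivAt_const s _

lemma ph_hasDeriv {M : ℝ → ℝ} (hM : ContDiffOn ℝ (⊤ : ℕ∞) M (Set.Ici 0)) {t : ℝ} (j l : ℕ)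
    {s : ℝ} (hs : 0 < t - s) : HasDerivAt (ph M t j l) (ph M t j (l+1) s) s := by
  have hout := Phi_deriv hM j l (t-s) hs
  have hin : HasDerivAt (fun s : ℝ => t - s) (-1) s := by
    simpa using (hasDerivAt_id s).const_sub t
  have hcomp := HasDerivAt.comp s hout hin
  have := hcomp.const_mul ((-1:ℝ)^l)
  refine this.congr_deriv (Eq.symm ?_)
  show (-1:ℝ)^(l+1) * Phi M j (l+1) (t-s) = _
  rw [pow_succ]
  ring

lemma leibniz_sum (a b : ℕ → ℝ) (m : ℕ) :
    ∑ k ∈ Finset.range (m+2), (((m+1).choose k : ℕ) : ℝ) * (a k * b (m+1-k))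
      = ∑ k ∈ Finset.range (m+1), ((m.choose k : ℕ) : ℝ)
          * (a (k+1) * b (m-k) + a k * b (m-k+1)) := by
  have e1 : ∀ k ∈ Finset.range (m+1), ((m.choose k : ℕ) : ℝ)
      * (a (k+1) * b (m-k) + a k * b (m-k+1))
      = ((m.choose k : ℕ) : ℝ)*(a (k+1) * b (m-k))
        + ((m.choose k : ℕ) : ℝ)*(a k * b (m+1-k)) := by
    intro k hk
    have hk' : k ≤ m := by
      have := Finset.mem_range.1 hk
      omega
    rw [show m-k+1 = m+1-k by omega]
    ring
  rw [Finset.sum_congr rfl e1, Finset.sum_add_distrib]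
  rw [Finset.sum_range_succ' (fun k => (((m+1).choose k : ℕ) : ℝ) * (a k * b (m+1-k))) (m+1)]
  simp only [Nat.succ_sub_succ, Nat.sub_zero]
  have e2 : ∀ k ∈ Finset.range (m+1), (((m+1).choose (k+1) : ℕ) : ℝ) * (a (k+1) * b (m-k))
      = ((m.choose k : ℕ) : ℝ)*(a (k+1)*b (m-k))
        + ((m.choose (k+1) : ℕ) : ℝ)*(a (k+1) * b (m-k)) := by
    intro k _
    rw [Nat.choose_succ_succ]
    push_cast
    ring
  rw [Finset.sum_congr rfl e2, Finset.sum_add_distrib]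
  have e3 : ∑ k ∈ Finset.range (m+1), ((m.choose (k+1) : ℕ) : ℝ)*(a (k+1) * b (m-k))
      + (((m+1).choose 0 : ℕ) : ℝ) * (a 0 * b (m+1))
      = ∑ k ∈ Finset.range (m+1), ((m.choose k : ℕ) : ℝ)*(a k * b (m+1-k)) := by
    rw [Finset.sum_range_succ' (fun k => ((m.choose k : ℕ) : ℝ)*(a k * b (m+1-k))) m]
    simp only [Nat.succ_sub_succ, Nat.choose_zero_right, Nat.cast_one, one_mul,
      Nat.sub_zero]
    rw [Finset.sum_range_succ]
    rw [Nat.choose_succ_self]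
    simp
  linarith [e3]

lemma TD_hasDeriv {M : ℝ → ℝ} (hM : ContDiffOn ℝ (⊤ : ℕ∞) M (Set.Ici 0)) {t : ℝ} (j m : ℕ)
    {s : ℝ} (hs : 0 < t - s) : HasDerivAt (TD M t j m) (TD M t j (m+1) s) s := by
  have hterm : ∀ k, HasDerivAt (fun s => dp j k s * ph M t j (m-k) s)
      (dp j (k+1) s * ph M t j (m-k) s + dp j k s * ph M t j (m-k+1) s) s :=
    fun k => (dp_hasDeriv j k s).mul (ph_hasDeriv hM j (m-k) hs)
  have hsum : HasDerivAt (TD M t j m)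
      (∑ k ∈ Finset.range (m+1), (m.choose k : ℝ) *
        (dp j (k+1) s * ph M t j (m-k) s + dp j k s * ph M t j (m-k+1) s)) s := by
    apply HasDerivAt.fun_sum
    intro k _
    exact (hterm k).const_mul _
  convert hsum using 1
  exact leibniz_sum (fun k => dp j k s) (fun l => ph M t j l s) m

lemma TD_bound {M : ℝ → ℝ} (hM : ContDiffOn ℝ (⊤ : ℕ∞) M (Set.Ici 0)) {t : ℝ} (ht : 0 ≤ t)
    {N : ℕ} (hN : 1 ≤ N) (j m : ℕ) (hm : m ≤ N) {s : ℝ} (hs : s ∈ Icc (0:ℝ) t) :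
    |TD M t j m s| ≤
      if j = 0 then 0 else Real.exp t * ((N:ℝ)*(1+t)*(AA M t N))^j / ((j.factorial : ℕ) : ℝ) := by
  rcases Nat.eq_zero_or_pos j with hj | hj
  · subst hj
    rw [if_pos rfl]
    have hz : ∀ k, ph M t 0 (m-k) s = 0 := by
      intro k
      show (-1:ℝ)^(m-k) * Phi M 0 (m-k) (t-s) = 0
      show (-1:ℝ)^(m-k) * 0 = 0
      ring
    unfold TD
    rw [Finset.sum_congr rfl (fun k _ => by rw [hz k, mul_zero, mul_zero])]
    simp
  · rw [if_neg (by omega)]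
    have hA : 0 ≤ AA M t N := A_nonneg hM ht
    have hts : t - s ∈ Icc (0:ℝ) t := ⟨by linarith [hs.2], by linarith [hs.1]⟩
    have hstep : ∀ k ∈ Finset.range (m+1),
        |(m.choose k : ℝ) * (dp j k s * ph M t j (m-k) s)|
        ≤ (m.choose k : ℝ) * (if k ≤ j then t^(j-k)/(((j-k).factorial : ℕ) : ℝ) else 0)
          * beta (AA M t N) t j (m-k) := by
      intro k _
      have hdp : |dp j k s| ≤ (if k ≤ j then t^(j-k)/(((j-k).factorial : ℕ) : ℝ) else 0) := by
        unfold dp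
        split_ifs with h
        · rw [abs_div, abs_mul, abs_pow, abs_neg, abs_one, one_pow, one_mul,
            abs_of_nonneg (pow_nonneg hs.1 _),
            abs_of_nonneg (by positivity : (0:ℝ) ≤ (((j-k).factorial : ℕ) : ℝ))]
          apply div_le_div_of_nonneg_right (pow_le_pow_left₀ hs.1 hs.2 _) (by positivity)
        · simp
      have hph : |ph M t j (m-k) s| ≤ beta (AA M t N) t j (m-k) := by
        unfold ph
        rw [abs_mul, abs_pow, abs_neg, abs_one, one_pow, one_mul]
        exact Phi_bound hM ht j (m-k) (by omega) (t-s) hts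
      rw [abs_mul, abs_mul]
      rw [Nat.abs_cast]
      rw [mul_assoc]
      apply mul_le_mul_of_nonneg_left ?_ (by positivity)
      apply mul_le_mul hdp hph (abs_nonneg _) ?_
      split_ifs
      · positivity
      · exact le_refl 0
    calc |TD M t j m s| ≤ ∑ k ∈ Finset.range (m+1),
          |(m.choose k : ℝ) * (dp j k s * ph M t j (m-k) s)| := Finset.abs_sum_le_sum_abs _ _
      _ ≤ ∑ k ∈ Finset.range (m+1),
          (m.choose k : ℝ) * (if k ≤ j then t^(j-k)/(((j-k).factorial : ℕ) : ℝ) else 0)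
            * beta (AA M t N) t j (m-k) := Finset.sum_le_sum hstep
      _ ≤ Real.exp t * ((N:ℝ)*(1+t)*(AA M t N))^j / ((j.factorial : ℕ) : ℝ) :=
          mainArith hA ht hm hN

section series

variable {M : ℝ → ℝ} (hM : ContDiffOn ℝ (⊤ : ℕ∞) M (Set.Ici 0))
variable {t : ℝ} {N : ℕ}

/-- the Weierstrass bound sequence -/
noncomputable def ub (X t : ℝ) (j : ℕ) : ℝ :=
  if j = 0 then 0 else Real.exp t * X^j / ((j.factorial : ℕ) : ℝ)

lemma ub_nonneg {X t : ℝ} (hX : 0 ≤ X) (j : ℕ) : 0 ≤ ub X t j := by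
  unfold ub
  split_ifs
  · exact le_refl 0
  · positivity

lemma summable_ub {X : ℝ} (t : ℝ) (hX : 0 ≤ X) : Summable (ub X t) := by
  apply Summable.of_nonneg_of_le (ub_nonneg hX) ?_
    ((Real.summable_pow_div_factorial X).mul_left (Real.exp t))
  intro j
  unfold ub
  split_ifs
  · positivity
  · exact le_of_eq (mul_div_assoc _ _ _)

lemma tsum_ub {X t : ℝ} (hX : 0 ≤ X) :
    ∑' j, ub X t j = Real.exp t * (Real.exp X - 1) := by
  have hsum : Summable (fun j : ℕ => X^j / ((j.factorial : ℕ) : ℝ)) :=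
    Real.summable_pow_div_factorial X
  have hexp : Real.exp X = ∑' j : ℕ, X^j / ((j.factorial : ℕ) : ℝ) := by
    rw [Real.exp_eq_exp_ℝ, NormedSpace.exp_eq_tsum_div]
  have h1 : ∑' j, ub X t j = ∑' j : ℕ, ub X t (j+1) := by
    rw [(summable_ub t hX).tsum_eq_zero_add]
    simp [ub]
  have h2 : ∑' j : ℕ, ub X t (j+1) = Real.exp t * ∑' j : ℕ, X^(j+1) / (((j+1).factorial : ℕ) : ℝ) := by
    rw [← tsum_mul_left]
    apply tsum_congr
    intro j
    unfold ub
    rw [if_neg (Nat.succ_ne_zero j)]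
    ring
  have h3 : Real.exp X = 1 + ∑' j : ℕ, X^(j+1) / (((j+1).factorial : ℕ) : ℝ) := by
    rw [hexp, hsum.tsum_eq_zero_add]
    simp
  rw [h1, h2]
  rw [show (∑' j : ℕ, X^(j+1) / (((j+1).factorial : ℕ) : ℝ)) = Real.exp X - 1 by linarith]

end series

noncomputable def KD (M : ℝ → ℝ) (t : ℝ) (m : ℕ) (s : ℝ) : ℝ := ∑' j, TD M t j m s

section kd

variable {M : ℝ → ℝ} (hM : ContDiffOn ℝ (⊤ : ℕ∞) M (Set.Ici 0))
variable {t : ℝ} {N : ℕ}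
include hM

lemma X_nonneg (ht : 0 ≤ t) : 0 ≤ (N:ℝ)*(1+t)*(AA M t N) :=
  mul_nonneg (mul_nonneg (by positivity) (by linarith)) (A_nonneg hM ht)

lemma TD_bound_ub (ht : 0 ≤ t) (hN : 1 ≤ N) (j m : ℕ) (hm : m ≤ N) {s : ℝ}
    (hs : s ∈ Icc (0:ℝ) t) :
    ‖TD M t j m s‖ ≤ ub ((N:ℝ)*(1+t)*(AA M t N)) t j := by
  have := TD_bound hM ht hN j m hm hs
  unfold ub
  exact this

lemma summable_TD (ht : 0 ≤ t) (hN : 1 ≤ N) {m : ℕ} (hm : m ≤ N) {s : ℝ}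
    (hs : s ∈ Icc (0:ℝ) t) : Summable (fun j => TD M t j m s) :=
  Summable.of_norm_bounded (summable_ub t (X_nonneg hM ht))
    (fun j => TD_bound_ub hM ht hN j m hm hs)

lemma KD_hasDerivAt (ht : 0 < t) (hN : 1 ≤ N) {m : ℕ} (hm : m + 1 ≤ N) :
    ∀ x ∈ Ioo (0:ℝ) t, HasDerivAt (KD M t m) (KD M t (m+1) x) x := by
  intro x hx
  apply hasDerivAt_of_tendstoUniformlyOn (l := atTop (α := ℕ)) (f := fun (n : ℕ) (s : ℝ) =>
      ∑ j ∈ Finset.range n, TD M t j m s)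
    (f' := fun (n : ℕ) (s : ℝ) => ∑ j ∈ Finset.range n, TD M t j (m+1) s)
    isOpen_Ioo ?_ ?_ ?_ hx
  · exact tendstoUniformlyOn_tsum_nat (summable_ub t (X_nonneg hM ht.le))
      (fun j x hx => TD_bound_ub hM ht.le hN j (m+1) hm
        ⟨hx.1.le, hx.2.le⟩)
  · apply Eventually.of_forall
    intro n y hy
    exact HasDerivAt.fun_sum (fun j _ => TD_hasDeriv hM j m (by linarith [hy.2] : 0 < t - y))
  · intro y hy
    exact (summable_TD hM ht.le hN (by omega) ⟨hy.1.le, hy.2.le⟩).hasSum.tendsto_sum_nat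

omit hM in
lemma KM_eq_KD0 : ∀ s, KM M t s = KD M t 0 s := by
  intro s
  apply tsum_congr
  intro j
  show ((-s) ^ j / (j.factorial : ℝ)) * convPow M j (t - s) = _
  unfold TD
  rw [Finset.sum_range_one]
  unfold dp ph
  rw [if_pos (Nat.zero_le j)]
  rw [Phi_zero M j]
  simp only [Nat.choose_self, Nat.cast_one, Nat.sub_zero, pow_zero, one_mul]
  first
  | (rw [neg_pow]; ring)
  | rw [neg_pow]

lemma iter_eq_KD (ht : 0 < t) (hN : 1 ≤ N) :
    ∀ m, m ≤ N → ∀ s ∈ Ioo (0:ℝ) t, iteratedDeriv m (fun s' => KM M t s') s = KD M t m s := by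
  intro m
  induction m with
  | zero =>
    intro _ s _
    rw [iteratedDeriv_zero]
    exact KM_eq_KD0 s
  | succ m IH =>
    intro hm s hs
    rw [iteratedDeriv_succ]
    have heq : (iteratedDeriv m (fun s' => KM M t s')) =ᶠ[𝓝 s] KD M t m := by
      filter_upwards [isOpen_Ioo.mem_nhds hs] with y hy
      exact IH (by omega) y hy
    rw [heq.deriv_eq]
    exact (KD_hasDerivAt hM ht hN hm s hs).deriv

omit hM in
lemma within_eq_iter {s : ℝ} (hs : s ∈ Ioo (0:ℝ) t) (n : ℕ) :
    iteratedDerivWithin n (fun s' => KM M t s') (Iic t) s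
      = iteratedDeriv n (fun s' => KM M t s') s := by
  have h1 : Iic t ∩ Ioo 0 t = Ioo 0 t :=
    inter_eq_self_of_subset_right (fun x hx => le_of_lt hx.2)
  have h2 : iteratedFDerivWithin ℝ n (fun s' => KM M t s') (Iic t) s
      = iteratedFDeriv ℝ n (fun s' => KM M t s') s := by
    calc iteratedFDerivWithin ℝ n (fun s' => KM M t s') (Iic t) s
        = iteratedFDerivWithin ℝ n (fun s' => KM M t s') (Iic t ∩ Ioo 0 t) s :=
          (iteratedFDerivWithin_inter_open isOpen_Ioo hs).symm
      _ = iteratedFDerivWithin ℝ n (fun s' => KM M t s') (Ioo 0 t) s := by rw [h1]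
      _ = iteratedFDeriv ℝ n (fun s' => KM M t s') s :=
          iteratedFDerivWithin_of_isOpen n isOpen_Ioo hs
  rw [iteratedDerivWithin_eq_iteratedFDerivWithin, iteratedDeriv_eq_iteratedFDeriv, h2]

lemma KD_N_bound (ht : 0 ≤ t) (hN : 1 ≤ N) {s : ℝ} (hs : s ∈ Icc (0:ℝ) t) :
    |KD M t N s| ≤ Real.exp t * (Real.exp ((N:ℝ)*(1+t)*(AA M t N)) - 1) := by
  have hX := X_nonneg hM (N := N) ht
  have hsummable : Summable (fun j => ‖TD M t j N s‖) :=
    Summable.of_nonneg_of_le (fun j => norm_nonneg _)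
      (fun j => TD_bound_ub hM ht hN j N (le_refl N) hs) (summable_ub t hX)
  calc |KD M t N s| ≤ ∑' j, ‖TD M t j N s‖ := norm_tsum_le_tsum_norm hsummable
    _ ≤ ∑' j, ub ((N:ℝ)*(1+t)*(AA M t N)) t j :=
        Summable.tsum_le_tsum (fun j => TD_bound_ub hM ht hN j N (le_refl N) hs) hsummable
          (summable_ub t hX)
    _ = Real.exp t * (Real.exp ((N:ℝ)*(1+t)*(AA M t N)) - 1) := tsum_ub hX

end kd

/-- bound on the remainder.  For `M ∈ C^∞([0,∞))`, `N ≥ 2`, `t ≥ 0`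
and `τ > 0`:
`|R_N(t,τ)| ≤ e^t (exp(N(1+t) ∑_{j=0}^N max_{[0,t]} |M^{(j)}|) − 1)`. -/
theorem RNrem_bound
    (M : ℝ → ℝ) (hM : ContDiffOn ℝ (⊤ : ℕ∞) M (Set.Ici 0))
    (N : ℕ) (hN : 2 ≤ N) :
    ∀ t : ℝ, 0 ≤ t → ∀ τ : ℝ, 0 < τ →
      |RNrem M N t τ| ≤
        Real.exp t *
          (Real.exp ((N : ℝ) * (1 + t) *
              ∑ j ∈ Finset.range (N + 1),
                ⨆ s : Set.Icc (0:ℝ) t, |iteratedDerivWithin j M (Set.Ici 0) s|) - 1) := by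
  intro t ht τ hτ
  have hN1 : 1 ≤ N := by omega
  have hA : 0 ≤ AA M t N := A_nonneg hM ht
  have hX : 0 ≤ (N:ℝ)*(1+t)*(AA M t N) := X_nonneg hM ht
  have hAeq : (∑ j ∈ Finset.range (N + 1),
      ⨆ s : Set.Icc (0:ℝ) t, |iteratedDerivWithin j M (Set.Ici 0) s|) = AA M t N := rfl
  rw [hAeq]
  set B := Real.exp t * (Real.exp ((N:ℝ)*(1+t)*(AA M t N)) - 1) with hB
  have hB0 : 0 ≤ B := by
    apply mul_nonneg (Real.exp_pos t).le
    have := Real.one_le_exp hX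
    linarith
  rcases eq_or_lt_of_le ht with h0 | hpos
  · -- t = 0
    unfold RNrem
    rw [← h0]
    rw [intervalIntegral.integral_same]
    simpa using hB0
  · -- t > 0
    have key : ∀ᵐ s ∂volume.restrict (Ι 0 t),
        ‖τ * Real.exp (-τ * s) * iteratedDerivWithin N (fun s' => KM M t s') (Set.Iic t) s‖
          ≤ τ * Real.exp (-τ * s) * B := by
      rw [uIoc_of_le ht]
      have hne : ∀ᵐ s : ℝ, s ≠ t := by
        have hset : {s : ℝ | ¬ s ≠ t} = {t} := by ext; simp
        rw [ae_iff, hset]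
        exact measure_singleton t
      filter_upwards [ae_restrict_of_ae hne, ae_restrict_mem measurableSet_Ioc] with s hsne hsm
      have hsIoo : s ∈ Ioo (0:ℝ) t := ⟨hsm.1, lt_of_le_of_ne hsm.2 hsne⟩
      have hW : iteratedDerivWithin N (fun s' => KM M t s') (Set.Iic t) s = KD M t N s := by
        rw [within_eq_iter hsIoo N, iter_eq_KD hM hpos hN1 N (le_refl N) s hsIoo]
      rw [hW]
      have habs : ‖τ * Real.exp (-τ * s) * KD M t N s‖
          = τ * Real.exp (-τ * s) * |KD M t N s| := by
        rw [Real.norm_eq_abs, abs_mul, abs_mul, abs_of_pos hτ, abs_of_pos (Real.exp_pos _)]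
      rw [habs]
      apply mul_le_mul_of_nonneg_left
        (KD_N_bound hM ht hN1 ⟨hsIoo.1.le, hsIoo.2.le⟩)
        (by positivity)
    have hbi : IntervalIntegrable (fun s => τ * Real.exp (-τ * s) * B) volume 0 t :=
      (by fun_prop : Continuous fun s : ℝ => τ * Real.exp (-τ * s) * B).intervalIntegrable 0 t
    have hmain := intervalIntegral.norm_integral_le_abs_of_norm_le key hbi
    have hval : ∫ s in (0:ℝ)..t, τ * Real.exp (-τ * s) * B = B * (1 - Real.exp (-τ * t)) := by
      have hderiv : ∀ x ∈ uIcc (0:ℝ) t, HasDerivAt (fun s => -Real.exp (-τ * s) * B)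
          (τ * Real.exp (-τ * x) * B) x := by
        intro x _
        have h1 : HasDerivAt (fun s : ℝ => -τ * s) (-τ * 1) x := (hasDerivAt_id x).const_mul (-τ)
        have h2 := (h1.exp).neg.mul_const B
        refine h2.congr_deriv (Eq.symm ?_)
        ring
      have := intervalIntegral.integral_eq_sub_of_hasDerivAt hderiv hbi
      rw [this]
      simp only [mul_zero, neg_zero, Real.exp_zero]
      ring
    rw [hval] at hmain
    have hfinal : |B * (1 - Real.exp (-τ * t))| ≤ B := by
      have he1 : Real.exp (-τ * t) ≤ 1 := by
        rw [← Real.exp_zero]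
        apply Real.exp_le_exp.2
        nlinarith
      have he0 : 0 < Real.exp (-τ * t) := Real.exp_pos _
      rw [abs_of_nonneg (by nlinarith)]
      nlinarith
    exact le_trans hmain hfinal
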